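/- Given a unit square Q = [0,1]² and a slab s (region between two parallel lines) of positive width with the slab directions coming from the construction, for every ε > 0 there exists ρ₀ > 0 such that for all ρ ≥ ρ₀ there exist centers c₁, c₂ ∈ ℝ² with: the intersection D(c₁,ρ) ∩ D(c₂,ρ) of the two closed disks of radius ρ is contained in s, and the area of (Q ∩ s) \ (D(c₁,ρ) ∩ D(c₂,ρ)) is less than ε. -/

import Mathlib

open MeasureTheory Filter
open scoped RealInnerProductSpace

lemma hyperplane_vol_zero (u : EuclideanSpace ℝ (Fin 2)) (hu : ‖u‖ = 1) (a : ℝ) :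
    volume {x : EuclideanSpace ℝ (Fin 2) | ⟪x, u⟫ = a} = 0 := by
  have hset : {x : EuclideanSpace ℝ (Fin 2) | ⟪x, u⟫ = a}
      = (fun x => x + -(a • u)) ⁻¹' ((ℝ ∙ u)ᗮ : Submodule ℝ (EuclideanSpace ℝ (Fin 2))) := by
    ext x
    simp only [Set.mem_setOf_eq, Set.mem_preimage, SetLike.mem_coe,
      Submodule.mem_orthogonal_singleton_iff_inner_right]
    rw [inner_add_right, inner_neg_right, real_inner_smul_right,
      real_inner_self_eq_norm_sq, hu, real_inner_comm]
    constructor <;> intro h <;> nlinarith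
  rw [hset, measure_preimage_add_right]
  apply Measure.addHaar_submodule
  intro htop
  have : u ∈ (ℝ ∙ u)ᗮ := htop ▸ Submodule.mem_top
  have h0 : ⟪u, u⟫ = 0 := Submodule.mem_orthogonal_singleton_iff_inner_right.mp this
  rw [real_inner_self_eq_norm_sq, hu] at h0
  norm_num at h0

lemma small_band (u : EuclideanSpace ℝ (Fin 2)) (hu : ‖u‖ = 1)
    (Q : Set (EuclideanSpace ℝ (Fin 2))) (hQm : MeasurableSet Q)
    (hQfin : volume Q ≠ ⊤) (a : ℝ) (ε : ℝ) (hε : 0 < ε) :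
    ∃ δ > (0:ℝ), volume (Q ∩ {x | a - δ ≤ ⟪x, u⟫ ∧ ⟪x, u⟫ ≤ a + δ}) < ENNReal.ofReal ε := by
  set A : ℕ → Set (EuclideanSpace ℝ (Fin 2)) :=
    fun n => Q ∩ {x | a - 1/(n+1) ≤ ⟪x, u⟫ ∧ ⟪x, u⟫ ≤ a + 1/(n+1)} with hA
  have hcont : Continuous fun x : EuclideanSpace ℝ (Fin 2) => ⟪x, u⟫ :=
    continuous_id.inner continuous_const
  have hmeas : ∀ n, NullMeasurableSet (A n) volume := by
    intro n
    refine (hQm.inter ?_).nullMeasurableSet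
    exact (isClosed_le continuous_const hcont).measurableSet.inter
      (isClosed_le hcont continuous_const).measurableSet
  have hanti : Antitone A := by
    intro n m hnm x hx
    have h1 : (1:ℝ)/(m+1) ≤ 1/(n+1) := by
      apply one_div_le_one_div_of_le <;> [positivity; exact_mod_cast by omega]
    exact ⟨hx.1, by linarith [hx.2.1], by linarith [hx.2.2]⟩
  have hfin : ∃ n, volume (A n) ≠ ⊤ :=
    ⟨0, fun h => hQfin (top_le_iff.mp (h ▸ measure_mono Set.inter_subset_left))⟩
  have hInter : volume (⋂ n, A n) = 0 := by
    refine measure_mono_null ?_ (hyperplane_vol_zero u hu a)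
    intro x hx
    simp only [Set.mem_iInter, hA, Set.mem_inter_iff, Set.mem_setOf_eq] at hx
    have h1 : ⟪x, u⟫ ≤ a := by
      by_contra h
      push_neg at h
      obtain ⟨n, hn⟩ := exists_nat_one_div_lt (show (0:ℝ) < ⟪x, u⟫ - a by linarith)
      linarith [(hx n).2.2]
    have h2 : a ≤ ⟪x, u⟫ := by
      by_contra h
      push_neg at h
      obtain ⟨n, hn⟩ := exists_nat_one_div_lt (show (0:ℝ) < a - ⟪x, u⟫ by linarith)
      linarith [(hx n).2.1]
    exact le_antisymm h1 h2
  have htend := tendsto_measure_iInter_atTop hmeas hanti hfin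
  rw [hInter] at htend
  have hev := htend.eventually_lt_const
    (show (0:ENNReal) < ENNReal.ofReal ε from ENNReal.ofReal_pos.mpr hε)
  obtain ⟨n, hn⟩ := hev.exists
  exact ⟨1/(n+1), by positivity, hn⟩

set_option maxHeartbeats 1000000 in
/-- A slab can be approximated by a lens inside the unit square: for any slab `s`
(region between two parallel lines, of positive width) and any `ε > 0`, there is
`ρ₀ > 0` such that for all `ρ ≥ ρ₀` one can place two closed disks of radius `ρ`
whose intersection (lens) lies inside `s` and covers `Q ∩ s` up to area less
than `ε`, where `Q = [0,1]²`. -/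
theorem slab_approx_by_lens
    (u : EuclideanSpace ℝ (Fin 2)) (hu : ‖u‖ = 1) (c w : ℝ) (hw : 0 < w)
    (s : Set (EuclideanSpace ℝ (Fin 2)))
    (hs : s = {x | c ≤ ⟪x, u⟫ ∧ ⟪x, u⟫ ≤ c + w})
    (Q : Set (EuclideanSpace ℝ (Fin 2)))
    (hQ : Q = {x | x 0 ∈ Set.Icc (0 : ℝ) 1 ∧ x 1 ∈ Set.Icc (0 : ℝ) 1}) :
    ∀ ε > (0 : ℝ), ∃ ρ₀ > (0 : ℝ), ∀ ρ ≥ ρ₀,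
      ∃ c₁ c₂ : EuclideanSpace ℝ (Fin 2),
        Metric.closedBall c₁ ρ ∩ Metric.closedBall c₂ ρ ⊆ s ∧
        volume ((Q ∩ s) \ (Metric.closedBall c₁ ρ ∩ Metric.closedBall c₂ ρ)) <
          ENNReal.ofReal ε := by
  intro ε hε
  -- the center of the square
  set q : EuclideanSpace ℝ (Fin 2) := (WithLp.equiv 2 (Fin 2 → ℝ)).symm ![1/2, 1/2] with hq
  have hQnorm : ∀ x ∈ Q, ‖x - q‖ ≤ 1 := by
    intro x hx
    rw [hQ] at hx
    obtain ⟨⟨h00, h01⟩, ⟨h10, h11⟩⟩ := hx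
    rw [EuclideanSpace.norm_eq]
    rw [show (1:ℝ) = Real.sqrt 1 by simp]
    apply Real.sqrt_le_sqrt
    rw [Fin.sum_univ_two]
    simp only [PiLp.sub_apply, hq, WithLp.equiv_symm_apply, PiLp.toLp_apply, Real.norm_eq_abs, sq_abs,
      Matrix.cons_val_zero, Matrix.cons_val_one, Matrix.head_cons]
    nlinarith
  have hQm : MeasurableSet Q := by
    rw [hQ]
    have h0 : Continuous fun x : EuclideanSpace ℝ (Fin 2) => x 0 :=
      (EuclideanSpace.proj (0 : Fin 2) : EuclideanSpace ℝ (Fin 2) →L[ℝ] ℝ).continuous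
    have h1 : Continuous fun x : EuclideanSpace ℝ (Fin 2) => x 1 :=
      (EuclideanSpace.proj (1 : Fin 2) : EuclideanSpace ℝ (Fin 2) →L[ℝ] ℝ).continuous
    exact ((measurableSet_Icc).preimage h0.measurable).inter
      ((measurableSet_Icc).preimage h1.measurable)
  have hQfin : volume Q ≠ ⊤ := by
    have hsub : Q ⊆ Metric.closedBall q 1 := by
      intro x hx
      rw [Metric.mem_closedBall, dist_eq_norm]
      exact hQnorm x hx
    exact ((measure_mono hsub).trans_lt measure_closedBall_lt_top).ne
  obtain ⟨δ₁, hδ₁, hb₁⟩ := small_band u hu Q hQm hQfin c (ε/2) (half_pos hε)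
  obtain ⟨δ₂, hδ₂, hb₂⟩ := small_band u hu Q hQm hQfin (c+w) (ε/2) (half_pos hε)
  set δ : ℝ := min δ₁ δ₂ with hδdef
  have hδ : 0 < δ := lt_min hδ₁ hδ₂
  refine ⟨max w ((4 + w^2)/(2*δ)), lt_of_lt_of_le hw (le_max_left _ _), ?_⟩
  intro ρ hρ
  have hρw : w ≤ ρ := le_trans (le_max_left _ _) hρ
  have hρδ : (4 + w^2)/(2*δ) ≤ ρ := le_trans (le_max_right _ _) hρ
  have hρpos : 0 < ρ := lt_of_lt_of_le hw hρw
  have hρδ' : 4 + w^2 ≤ 2*δ*ρ := by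
    rw [div_le_iff₀ (by positivity)] at hρδ
    linarith
  set p₀ : EuclideanSpace ℝ (Fin 2) := q - ⟪q, u⟫ • u with hp₀
  have hpu : ⟪p₀, u⟫ = 0 := by
    rw [hp₀, inner_sub_left, real_inner_smul_left, real_inner_self_eq_norm_sq, hu]
    ring
  refine ⟨p₀ + (c + ρ) • u, p₀ + (c + w - ρ) • u, ?_, ?_⟩
  · -- containment in the slab
    rintro x ⟨hx1, hx2⟩
    rw [Metric.mem_closedBall, dist_eq_norm] at hx1 hx2
    have hi1 : |⟪x - (p₀ + (c + ρ) • u), u⟫| ≤ ρ := by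
      calc |⟪x - (p₀ + (c + ρ) • u), u⟫| ≤ ‖x - (p₀ + (c + ρ) • u)‖ * ‖u‖ :=
            abs_real_inner_le_norm _ _
        _ ≤ ρ := by rw [hu, mul_one]; exact hx1
    have hi2 : |⟪x - (p₀ + (c + w - ρ) • u), u⟫| ≤ ρ := by
      calc |⟪x - (p₀ + (c + w - ρ) • u), u⟫| ≤ ‖x - (p₀ + (c + w - ρ) • u)‖ * ‖u‖ :=
            abs_real_inner_le_norm _ _
        _ ≤ ρ := by rw [hu, mul_one]; exact hx2
    rw [inner_sub_left, inner_add_left, real_inner_smul_left, hpu,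
      real_inner_self_eq_norm_sq, hu] at hi1 hi2
    rw [abs_le] at hi1 hi2
    rw [hs]
    constructor
    · nlinarith [hi1.2]
    · nlinarith [hi2.1]
  · -- coverage
    set c₁ : EuclideanSpace ℝ (Fin 2) := p₀ + (c + ρ) • u with hc₁
    set c₂ : EuclideanSpace ℝ (Fin 2) := p₀ + (c + w - ρ) • u with hc₂
    set B₁ : Set (EuclideanSpace ℝ (Fin 2)) :=
      Q ∩ {x | c - δ₁ ≤ ⟪x, u⟫ ∧ ⟪x, u⟫ ≤ c + δ₁} with hB₁
    set B₂ : Set (EuclideanSpace ℝ (Fin 2)) :=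
      Q ∩ {x | (c+w) - δ₂ ≤ ⟪x, u⟫ ∧ ⟪x, u⟫ ≤ (c+w) + δ₂} with hB₂
    have hsub : (Q ∩ s) \ (Metric.closedBall c₁ ρ ∩ Metric.closedBall c₂ ρ) ⊆ B₁ ∪ B₂ := by
      rintro x ⟨⟨hxQ, hxs⟩, hxl⟩
      rw [hs, Set.mem_setOf_eq] at hxs
      by_contra hB
      rw [Set.mem_union] at hB
      push_neg at hB
      obtain ⟨hB1, hB2⟩ := hB
      have ht1 : c + δ₁ < ⟪x, u⟫ := by
        by_contra h
        push_neg at h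
        exact hB1 ⟨hxQ, by linarith [hxs.1], h⟩
      have ht2 : ⟪x, u⟫ < (c + w) - δ₂ := by
        by_contra h
        push_neg at h
        exact hB2 ⟨hxQ, h, by linarith [hxs.2]⟩
      -- show x is in the lens, contradiction
      set y : EuclideanSpace ℝ (Fin 2) := (x - q) - ⟪x - q, u⟫ • u with hy
      have hyu : ⟪y, u⟫ = 0 := by
        rw [hy, inner_sub_left, real_inner_smul_left, real_inner_self_eq_norm_sq, hu]
        ring
      have hybound : ‖y‖ ≤ 2 := by
        have h1 : ‖y‖ ≤ ‖x - q‖ + ‖⟪x - q, u⟫ • u‖ := norm_sub_le _ _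
        rw [norm_smul, hu, mul_one, Real.norm_eq_abs] at h1
        have h2 := abs_real_inner_le_norm (x - q) u
        rw [hu, mul_one] at h2
        have h3 := hQnorm x hxQ
        linarith
      have hdec1 : x - c₁ = y + (⟪x, u⟫ - (c + ρ)) • u := by
        rw [hy, hc₁, hp₀, inner_sub_left]
        module
      have hdec2 : x - c₂ = y + (⟪x, u⟫ - (c + w - ρ)) • u := by
        rw [hy, hc₂, hp₀, inner_sub_left]
        module
      have hn1 : ‖x - c₁‖^2 = ‖y‖^2 + (⟪x, u⟫ - (c + ρ))^2 := by
        rw [hdec1, norm_add_sq_real, real_inner_smul_right, hyu, norm_smul, hu,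
          Real.norm_eq_abs, mul_one, sq_abs]
        ring
      have hn2 : ‖x - c₂‖^2 = ‖y‖^2 + (⟪x, u⟫ - (c + w - ρ))^2 := by
        rw [hdec2, norm_add_sq_real, real_inner_smul_right, hyu, norm_smul, hu,
          Real.norm_eq_abs, mul_one, sq_abs]
        ring
      have hδ₁' : δ ≤ δ₁ := min_le_left _ _
      have hδ₂' : δ ≤ δ₂ := min_le_right _ _
      have htl : c + δ < ⟪x, u⟫ := by linarith
      have htu : ⟪x, u⟫ < c + w - δ := by linarith
      have main : ∀ N T : ℝ, N ≤ 2 → 0 ≤ N → c + δ < T → T < c + w - δ →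
          N^2 + (T - (c + ρ))^2 ≤ ρ^2 ∧ N^2 + (T - (c + w - ρ))^2 ≤ ρ^2 := by
        intro N T h1 h2 h3 h4
        have key1 : 4 + (T - c)^2 ≤ 2*(T - c)*ρ := by
          nlinarith [mul_nonneg (show (0:ℝ) ≤ T - c - δ by linarith) hρpos.le,
            mul_nonneg (show (0:ℝ) ≤ w - (T - c) by linarith)
              (show (0:ℝ) ≤ w + (T - c) by linarith)]
        have key2 : 4 + (c + w - T)^2 ≤ 2*(c + w - T)*ρ := by
          nlinarith [mul_nonneg (show (0:ℝ) ≤ c + w - T - δ by linarith) hρpos.le,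
            mul_nonneg (show (0:ℝ) ≤ w - (c + w - T) by linarith)
              (show (0:ℝ) ≤ w + (c + w - T) by linarith)]
        constructor <;> nlinarith [key1, key2]
      obtain ⟨m1, m2⟩ := main ‖y‖ ⟪x, u⟫ hybound (norm_nonneg y) htl htu
      have hl1 : ‖x - c₁‖ ≤ ρ := by
        have hsq : ‖x - c₁‖^2 ≤ ρ^2 := by rw [hn1]; exact m1
        exact (pow_le_pow_iff_left₀ (norm_nonneg _) hρpos.le two_ne_zero).mp hsq
      have hl2 : ‖x - c₂‖ ≤ ρ := by
        have hsq : ‖x - c₂‖^2 ≤ ρ^2 := by rw [hn2]; exact m2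
        exact (pow_le_pow_iff_left₀ (norm_nonneg _) hρpos.le two_ne_zero).mp hsq
      exact hxl ⟨by rwa [Metric.mem_closedBall, dist_eq_norm],
        by rwa [Metric.mem_closedBall, dist_eq_norm]⟩
    calc volume ((Q ∩ s) \ (Metric.closedBall c₁ ρ ∩ Metric.closedBall c₂ ρ))
        ≤ volume (B₁ ∪ B₂) := measure_mono hsub
      _ ≤ volume B₁ + volume B₂ := measure_union_le _ _
      _ < ENNReal.ofReal (ε/2) + ENNReal.ofReal (ε/2) := ENNReal.add_lt_add hb₁ hb₂
      _ = ENNReal.ofReal ε := by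
          rw [← ENNReal.ofReal_add (by linarith) (by linarith)]
          norm_num
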